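/- Let θ, ζ > 0 and let P^{(θ,ζ)} be the probability measure on Ω = ∏_{n≥1} {1,…,n} under which the coordinates ω_n are independent with ω_1 = 1 and, for n ≥ 2, P(ω_n = 1) = θ/(θ+ζ+n−2), P(ω_n = n) = ζ/(θ+ζ+n−2), and P(ω_n = r) = 1/(θ+ζ+n−2) for 2 ≤ r ≤ n−1. Define V_1(ω) = 1 and, for n ≥ 2, V_n(ω) = V_{n−1}(ω) + 1 if ω_n ≤ V_{n−1}(ω) and V_n(ω) = V_{n−1}(ω) otherwise (so V_n is the first entry π_{n1} of the n-th coherent random permutation). Then there exists a measurable function ρ_0 : Ω → [0,1] such that V_n/n → ρ_0 almost surely under P^{(θ,ζ)}, and the pushforward of P^{(θ,ζ)} under ρ_0 is the beta(θ,ζ) distribution, i.e. the measure on [0,1] with density x ↦ x^{θ−1}(1−x)^{ζ−1}·Γ(θ+ζ)/(Γ(θ)Γ(ζ)) with respect to Lebesgue measure. -/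

import Mathlib

open MeasureTheory ENNReal

/-- the space `Ω = ∏_{n≥1} {1,…,n}` of sequences of initial ranks: the coordinate of
index `k` (0-based) encodes `ω_{k+1} ∈ {1,…,k+1}` as an element of `Fin (k+1)`
(value `v` encodes rank `v+1`; rank `1`, i.e. `v = 0`, marks a lower record and
rank `k+1`, i.e. `v = k`, marks an upper record). -/
abbrev RankSpace := (k : ℕ) → Fin (k + 1)

/-- cylinder event `{ω_1 = i_1, …, ω_n = i_n}` -/
def rankCyl {n : ℕ} (i : (j : Fin n) → Fin (j.val + 1)) : Set RankSpace :=
  {ω | ∀ j : Fin n, ω j.val = i j}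

/-- the `P^{(θ,ζ)}`-probability that the coordinate of index `j` equals `v`:
for `j ≥ 1` (encoding `ω_n`, `n = j+1 ≥ 2`): `θ/(θ+ζ+n−2)` for rank `1`,
`ζ/(θ+ζ+n−2)` for rank `n`, and `1/(θ+ζ+n−2)` for each middle rank. -/
noncomputable def tzWt (θ ζ : ℝ) (j : ℕ) (v : Fin (j + 1)) : ℝ≥0∞ :=
  if j = 0 then 1
  else if v.val = 0 then ENNReal.ofReal (θ / (θ + ζ + (j : ℝ) - 1))
  else if v.val = j then ENNReal.ofReal (ζ / (θ + ζ + (j : ℝ) - 1))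
  else ENNReal.ofReal (1 / (θ + ζ + (j : ℝ) - 1))

/-- `firstEntry ω n` is `V_n`, the first entry `π_{n1}` of the `n`-th coherent random
permutation: `V_1 = 1` and `V_n = V_{n−1} + 1` if `ω_n ≤ V_{n−1}`, else `V_n = V_{n−1}`
(the coordinate of index `n−1`, plus `1`, is the initial rank `ω_n ∈ {1,…,n}`). -/
def firstEntry (ω : RankSpace) : ℕ → ℕ
  | 0 => 1
  | 1 => 1
  | (n + 2) =>
      if (ω (n + 1)).val + 1 ≤ firstEntry ω (n + 1) then firstEntry ω (n + 1) + 1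
      else firstEntry ω (n + 1)

namespace S16

open Filter

abbrev Gam (n : ℕ) := (j : Fin n) → Fin (j.val + 1)

def res (n : ℕ) (ω : RankSpace) : Gam n := fun j => ω j.val

lemma measurable_res (n : ℕ) : Measurable (res n) :=
  measurable_pi_lambda _ (fun j => measurable_pi_apply j.val)

def extend (n : ℕ) (i : Gam n) : RankSpace := fun k => if h : k < n then i ⟨k, h⟩ else 0

def VG {n : ℕ} (i : Gam n) : ℕ := firstEntry (extend n i) n

def trunc {n : ℕ} (i : Gam (n + 1)) : Gam n := fun j => i j.castSucc

lemma measurable_trunc (n : ℕ) : Measurable (trunc (n := n)) :=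
  measurable_pi_lambda _ (fun j => measurable_pi_apply _)

lemma res_eq_trunc_res (n : ℕ) : res n = trunc ∘ res (n + 1) := rfl

lemma firstEntry_congr (ω ω' : RankSpace) :
    ∀ n, (∀ k, k < n → ω k = ω' k) → firstEntry ω n = firstEntry ω' n := by
  intro n
  induction n with
  | zero => intro _; rfl
  | succ m ih =>
    intro h
    cases m with
    | zero => rfl
    | succ m' =>
      have h1 : firstEntry ω (m' + 1) = firstEntry ω' (m' + 1) :=
        ih (fun k hk => h k (Nat.lt_succ_of_lt hk))
      have h2 : ω (m' + 1) = ω' (m' + 1) := h (m' + 1) (Nat.lt_succ_self _)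
      simp only [firstEntry, h1, h2]

lemma firstEntry_res (ω : RankSpace) (n : ℕ) : firstEntry ω n = VG (res n ω) :=
  firstEntry_congr ω (extend n (res n ω)) n
    (fun k hk => by simp [extend, res, dif_pos hk])

lemma firstEntry_pos (ω : RankSpace) : ∀ n, 1 ≤ firstEntry ω n := by
  intro n
  induction n with
  | zero => exact le_refl 1
  | succ m ih =>
    cases m with
    | zero => exact le_refl 1
    | succ m' =>
      simp only [firstEntry]
      split <;> omega

lemma firstEntry_le (ω : RankSpace) : ∀ n, firstEntry ω (n + 1) ≤ n + 1 := by
  intro n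
  induction n with
  | zero => exact le_refl 1
  | succ m ih =>
    simp only [firstEntry]
    split <;> omega

lemma VG_pos {n : ℕ} (i : Gam n) : 1 ≤ VG i := firstEntry_pos _ n

lemma VG_le {n : ℕ} (i : Gam (n + 1)) : VG i ≤ n + 1 := firstEntry_le _ n

lemma VG_snoc (n : ℕ) (i : Gam (n + 1)) (v : Fin (n + 2)) :
    VG (Fin.snoc i v : Gam (n + 2)) = if v.val + 1 ≤ VG i then VG i + 1 else VG i := by
  unfold VG
  have h1 : firstEntry (extend (n + 2) (Fin.snoc i v)) (n + 1)
      = firstEntry (extend (n + 1) i) (n + 1) := by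
    refine firstEntry_congr _ _ _ (fun k hk => ?_)
    have hk2 : k < n + 2 := by omega
    simp only [extend, dif_pos hk, dif_pos hk2]
    simp [Fin.snoc, hk]
  have h2 : extend (n + 2) (Fin.snoc i v) (n + 1) = v := by
    simp only [extend, dif_pos (by omega : n + 1 < n + 2)]
    simp [Fin.snoc]
  simp only [firstEntry, h1, h2]

lemma trunc_snoc (n : ℕ) (i : Gam (n + 1)) (v : Fin (n + 2)) :
    trunc (Fin.snoc i v : Gam (n + 2)) = i := by
  funext j
  simp [trunc, Fin.snoc_castSucc]

lemma sum_snoc (n : ℕ) (g : Gam (n + 1) → ℝ) :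
    ∑ i : Gam (n + 1), g i = ∑ i : Gam n, ∑ v : Fin (n + 1), g (Fin.snoc i v) := by
  rw [← (Fin.snocEquiv (fun j : Fin (n + 1) => Fin (j.val + 1))).sum_comp g,
    Fintype.sum_prod_type, Finset.sum_comm]
  rfl

end S16

namespace S16x
end S16x
namespace S16
open Filter

noncomputable def w (θ ζ : ℝ) (j : ℕ) (v : Fin (j + 1)) : ℝ := (tzWt θ ζ j v).toReal

noncomputable def pw (θ ζ : ℝ) {n : ℕ} (i : Gam n) : ℝ := ∏ j : Fin n, w θ ζ j.val (i j)

variable {θ ζ : ℝ} (hθ : 0 < θ) (hζ : 0 < ζ)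

lemma w_succ (hθ : 0 < θ) (hζ : 0 < ζ) (n : ℕ) (v : Fin (n + 2)) :
    w θ ζ (n + 1) v = (if v.val = 0 then θ else if v.val = n + 1 then ζ else 1) / (θ + ζ + n) := by
  have hD : (0:ℝ) < θ + ζ + n := by positivity
  have hc : θ + ζ + ((n + 1 : ℕ) : ℝ) - 1 = θ + ζ + n := by push_cast; ring
  unfold w tzWt
  simp only [Nat.succ_ne_zero, if_false, hc]
  split_ifs <;> rw [toReal_ofReal (by positivity)]

lemma w_nonneg (θ ζ : ℝ) (j : ℕ) (v : Fin (j + 1)) : 0 ≤ w θ ζ j v := toReal_nonneg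

lemma w_sum (hθ : 0 < θ) (hζ : 0 < ζ) (n : ℕ) :
    ∑ v : Fin (n + 2), w θ ζ (n + 1) v = 1 := by
  have hD : (0:ℝ) < θ + ζ + n := by positivity
  simp only [w_succ hθ hζ n]
  rw [Fin.sum_univ_eq_sum_range
    (fun k => (if k = 0 then θ else if k = n + 1 then ζ else 1) / (θ + ζ + n)) (n + 2)]
  rw [Finset.sum_range_succ, Finset.sum_range_succ']
  have h1 : ∀ k ∈ Finset.range n,
      (if k + 1 = 0 then θ else if k + 1 = n + 1 then ζ else 1) / (θ + ζ + n)
        = 1 / (θ + ζ + n) := by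
    intro k hk
    rw [Finset.mem_range] at hk
    rw [if_neg (Nat.succ_ne_zero k), if_neg (by omega)]
  rw [Finset.sum_congr rfl h1, Finset.sum_const, Finset.card_range]
  simp only [if_pos rfl, if_neg (Nat.succ_ne_zero n), nsmul_eq_mul, if_true]
  field_simp
  ring

lemma w_sum_ind (hθ : 0 < θ) (hζ : 0 < ζ) (n : ℕ) {V : ℕ} (h1 : 1 ≤ V) (h2 : V ≤ n + 1) :
    ∑ v : Fin (n + 2), (if v.val + 1 ≤ V then w θ ζ (n + 1) v else 0)
      = (θ + V - 1) / (θ + ζ + n) := by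
  have hD : (0:ℝ) < θ + ζ + n := by positivity
  simp only [w_succ hθ hζ n]
  rw [Fin.sum_univ_eq_sum_range
    (fun k => if k + 1 ≤ V then
      (if k = 0 then θ else if k = n + 1 then ζ else 1) / (θ + ζ + n) else 0) (n + 2)]
  rw [← Finset.sum_subset (Finset.range_subset_range.mpr (by omega : V ≤ n + 2))
    (fun x _ hx => by rw [if_neg (by rw [Finset.mem_range] at hx; omega)])]
  obtain ⟨m, rfl⟩ : ∃ m, V = m + 1 := ⟨V - 1, by omega⟩
  rw [Finset.sum_range_succ']
  have h3 : ∀ k ∈ Finset.range m,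
      (if k + 1 + 1 ≤ m + 1 then
        (if k + 1 = 0 then θ else if k + 1 = n + 1 then ζ else 1) / (θ + ζ + n) else 0)
        = 1 / (θ + ζ + n) := by
    intro k hk
    rw [Finset.mem_range] at hk
    rw [if_pos (by omega), if_neg (Nat.succ_ne_zero k), if_neg (by omega)]
  rw [Finset.sum_congr rfl h3, Finset.sum_const, Finset.card_range]
  simp only [if_pos (by omega : 0 + 1 ≤ m + 1), if_pos rfl, nsmul_eq_mul]
  push_cast
  field_simp
  ring

lemma w_step (hθ : 0 < θ) (hζ : 0 < ζ) (n : ℕ) (f : ℕ → ℝ) {V : ℕ}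
    (h1 : 1 ≤ V) (h2 : V ≤ n + 1) :
    ∑ v : Fin (n + 2), w θ ζ (n + 1) v * f (if v.val + 1 ≤ V then V + 1 else V)
      = f V + ((θ + V - 1) / (θ + ζ + n)) * (f (V + 1) - f V) := by
  have key : ∀ v : Fin (n + 2), w θ ζ (n + 1) v * f (if v.val + 1 ≤ V then V + 1 else V)
      = w θ ζ (n + 1) v * f V
        + (if v.val + 1 ≤ V then w θ ζ (n + 1) v else 0) * (f (V + 1) - f V) := by
    intro v; split_ifs with h <;> ring
  simp only [key]
  rw [Finset.sum_add_distrib, ← Finset.sum_mul, ← Finset.sum_mul, w_sum hθ hζ n,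
    w_sum_ind hθ hζ n h1 h2, one_mul]

end S16

namespace S16
open Filter

variable {θ ζ : ℝ} {P : Measure RankSpace} [IsProbabilityMeasure P]

lemma pw_eq_toReal (θ ζ : ℝ) {n : ℕ} (i : Gam n) :
    pw θ ζ i = (∏ j : Fin n, tzWt θ ζ j.val (i j)).toReal := by
  rw [ENNReal.toReal_prod]; rfl

lemma pw_snoc (θ ζ : ℝ) (n : ℕ) (i : Gam (n + 1)) (v : Fin (n + 2)) :
    pw θ ζ (Fin.snoc i v : Gam (n + 2)) = pw θ ζ i * w θ ζ (n + 1) v := by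
  unfold pw
  rw [Fin.prod_univ_castSucc]
  congr 1
  · refine Finset.prod_congr rfl fun j _ => ?_
    congr 1
    simp [Fin.snoc, j.isLt]
  · congr 1
    simp [Fin.snoc]

lemma Q_singleton (hP : ∀ (n : ℕ) (i : Gam n), P (rankCyl i) = ∏ j : Fin n, tzWt θ ζ j.val (i j))
    (n : ℕ) (i : Gam n) :
    P.map (res n) {i} = ∏ j : Fin n, tzWt θ ζ j.val (i j) := by
  rw [Measure.map_apply (measurable_res n) (measurableSet_singleton i), ← hP n i]
  congr 1
  ext ω
  simp [rankCyl, res, funext_iff]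

lemma integral_res (hP : ∀ (n : ℕ) (i : Gam n), P (rankCyl i) = ∏ j : Fin n, tzWt θ ζ j.val (i j))
    (n : ℕ) (f : Gam n → ℝ) :
    ∫ ω, f (res n ω) ∂P = ∑ i : Gam n, pw θ ζ i * f i := by
  have h1 : IsProbabilityMeasure (P.map (res n)) :=
    Measure.isProbabilityMeasure_map (measurable_res n).aemeasurable
  rw [← integral_map (measurable_res n).aemeasurable
    (measurable_of_countable f).aestronglyMeasurable]
  rw [integral_fintype Integrable.of_finite]
  exact Finset.sum_congr rfl fun i _ => by
    rw [measureReal_def, Q_singleton hP, smul_eq_mul, pw_eq_toReal]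

lemma sum_key (hθ : 0 < θ) (hζ : 0 < ζ) (n : ℕ) (F : Gam (n + 1) → ℝ) (f : ℕ → ℝ) :
    ∑ i : Gam (n + 2), pw θ ζ i * (F (trunc i) * f (VG i))
      = ∑ i : Gam (n + 1), pw θ ζ i * (F i *
          (f (VG i) + ((θ + VG i - 1) / (θ + ζ + n)) * (f (VG i + 1) - f (VG i)))) := by
  rw [sum_snoc]
  refine Finset.sum_congr rfl fun i _ => ?_
  have h1 : ∀ v : Fin (n + 2),
      pw θ ζ (Fin.snoc i v : Gam (n + 2)) * (F (trunc (Fin.snoc i v : Gam (n + 2)))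
          * f (VG (Fin.snoc i v : Gam (n + 2))))
        = (pw θ ζ i * F i) * (w θ ζ (n + 1) v * f (if v.val + 1 ≤ VG i then VG i + 1 else VG i)) := by
    intro v
    rw [pw_snoc, trunc_snoc, VG_snoc]
    ring
  rw [Finset.sum_congr rfl (fun v _ => h1 v), ← Finset.mul_sum,
    w_step hθ hζ n f (VG_pos i) (VG_le i)]
  ring

noncomputable def RF (θ : ℝ) (k : ℕ) (x : ℝ) : ℝ := ∏ j ∈ Finset.range k, (x + θ - 1 + j)

lemma prod_shift (a : ℝ) (k : ℕ) :
    a * ∏ j ∈ Finset.range k, (a + 1 + j) = (a + k) * ∏ j ∈ Finset.range k, (a + j) := by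
  have h1 := Finset.prod_range_succ (fun j : ℕ => a + j) k
  have h2 := Finset.prod_range_succ' (fun j : ℕ => a + j) k
  have h3 : ∀ j ∈ Finset.range k, (a + ((j : ℝ) + 1)) = a + 1 + j := fun j _ => by ring
  simp only [Nat.cast_add, Nat.cast_one] at h2
  rw [Finset.prod_congr rfl h3] at h2
  simp only [Nat.cast_zero, add_zero] at h2
  calc a * ∏ j ∈ Finset.range k, (a + 1 + j)
      = (∏ j ∈ Finset.range k, (a + 1 + ↑j)) * a := by ring
    _ = ∏ j ∈ Finset.range (k + 1), (a + j) := h2.symm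
    _ = (∏ j ∈ Finset.range k, (a + j)) * (a + k) := h1
    _ = (a + k) * ∏ j ∈ Finset.range k, (a + j) := by ring

lemma RF_one (θ : ℝ) (k : ℕ) : RF θ k 1 = ∏ j ∈ Finset.range k, (θ + j) :=
  Finset.prod_congr rfl fun j _ => by ring

lemma RF_rec (θ : ℝ) (k : ℕ) (x : ℝ) :
    (x + θ - 1) * RF θ k (x + 1) = (x + θ - 1 + k) * RF θ k x := by
  have h := prod_shift (x + θ - 1) k
  unfold RF
  have h3 : ∀ j ∈ Finset.range k, (x + 1 + θ - 1 + (j:ℝ)) = (x + θ - 1) + 1 + j :=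
    fun j _ => by ring
  rw [Finset.prod_congr rfl h3, h]

end S16

namespace S16
open Filter

variable {θ ζ : ℝ} {P : Measure RankSpace} [IsProbabilityMeasure P]
variable (hP : ∀ (n : ℕ) (i : Gam n), P (rankCyl i) = ∏ j : Fin n, tzWt θ ζ j.val (i j))

lemma integral_V (hP : ∀ (n : ℕ) (i : Gam n), P (rankCyl i) = ∏ j : Fin n, tzWt θ ζ j.val (i j))
    (n : ℕ) (f : ℕ → ℝ) :
    ∫ ω, f (firstEntry ω (n + 1)) ∂P = ∑ i : Gam (n + 1), pw θ ζ i * f (VG i) := by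
  rw [show (fun ω => f (firstEntry ω (n + 1)))
      = fun ω => (fun i : Gam (n + 1) => f (VG i)) (res (n + 1) ω) from
    funext fun ω => by rw [firstEntry_res]]
  exact integral_res hP (n + 1) (fun i => f (VG i))

lemma S_zero (hP : ∀ (n : ℕ) (i : Gam n), P (rankCyl i) = ∏ j : Fin n, tzWt θ ζ j.val (i j))
    (k : ℕ) :
    ∫ ω, RF θ k ((firstEntry ω 1 : ℕ) : ℝ) ∂P = RF θ k 1 := by
  have h : ∀ ω : RankSpace, RF θ k ((firstEntry ω 1 : ℕ) : ℝ) = RF θ k 1 := fun ω => by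
    show RF θ k (((1 : ℕ) : ℝ)) = RF θ k 1
    norm_num
  rw [integral_congr_ae (Filter.Eventually.of_forall h), integral_const, probReal_univ]
  simp

lemma S_succ (hθ : 0 < θ) (hζ : 0 < ζ)
    (hP : ∀ (n : ℕ) (i : Gam n), P (rankCyl i) = ∏ j : Fin n, tzWt θ ζ j.val (i j))
    (n k : ℕ) :
    (∫ ω, RF θ k ((firstEntry ω (n + 2) : ℕ) : ℝ) ∂P) * (θ + ζ + n)
      = (∫ ω, RF θ k ((firstEntry ω (n + 1) : ℕ) : ℝ) ∂P) * (θ + ζ + n + k) := by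
  have hD : (0:ℝ) < θ + ζ + n := by positivity
  rw [integral_V hP (n + 1) (fun m => RF θ k (m : ℝ)),
    integral_V hP n (fun m => RF θ k (m : ℝ))]
  have hkey := sum_key hθ hζ n (fun _ => (1:ℝ)) (fun m => RF θ k (m : ℝ))
  simp only [one_mul] at hkey
  rw [hkey, Finset.sum_mul, Finset.sum_mul]
  refine Finset.sum_congr rfl fun i _ => ?_
  have h1 : (1:ℝ) ≤ (VG i : ℝ) := by exact_mod_cast VG_pos i
  have hrec := RF_rec θ k ((VG i : ℕ) : ℝ)
  have hcast : (((VG i + 1 : ℕ)) : ℝ) = ((VG i : ℕ) : ℝ) + 1 := by push_cast; ring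
  rw [hcast]
  field_simp
  linear_combination pw θ ζ i * hrec

lemma S_closed (hθ : 0 < θ) (hζ : 0 < ζ)
    (hP : ∀ (n : ℕ) (i : Gam n), P (rankCyl i) = ∏ j : Fin n, tzWt θ ζ j.val (i j))
    (n k : ℕ) :
    (∫ ω, RF θ k ((firstEntry ω (n + 1) : ℕ) : ℝ) ∂P) * ∏ j ∈ Finset.range k, (θ + ζ + j)
      = (∏ j ∈ Finset.range k, (θ + j)) * ∏ j ∈ Finset.range k, (θ + ζ + n + j) := by
  induction n with
  | zero =>
    rw [S_zero hP k, RF_one]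
    refine congrArg _ (Finset.prod_congr rfl fun j _ => by norm_num)
  | succ m ih =>
    have hD : (0:ℝ) < θ + ζ + m := by positivity
    have hs := S_succ hθ hζ hP m k
    have hshift := prod_shift (θ + ζ + m) k
    apply mul_right_cancel₀ hD.ne'
    have hprod : ∀ j ∈ Finset.range k, (θ + ζ + ((m + 1 : ℕ) : ℝ) + j) = (θ + ζ + m) + 1 + j :=
      fun j _ => by push_cast; ring
    calc (∫ ω, RF θ k ((firstEntry ω (m + 2) : ℕ) : ℝ) ∂P)
          * (∏ j ∈ Finset.range k, (θ + ζ + j)) * (θ + ζ + m)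
        = ((∫ ω, RF θ k ((firstEntry ω (m + 2) : ℕ) : ℝ) ∂P) * (θ + ζ + m))
          * ∏ j ∈ Finset.range k, (θ + ζ + j) := by ring
      _ = ((∫ ω, RF θ k ((firstEntry ω (m + 1) : ℕ) : ℝ) ∂P) * (θ + ζ + m + k))
          * ∏ j ∈ Finset.range k, (θ + ζ + j) := by rw [hs]
      _ = ((∫ ω, RF θ k ((firstEntry ω (m + 1) : ℕ) : ℝ) ∂P)
          * ∏ j ∈ Finset.range k, (θ + ζ + j)) * (θ + ζ + m + k) := by ring
      _ = ((∏ j ∈ Finset.range k, (θ + j)) * ∏ j ∈ Finset.range k, (θ + ζ + m + j))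
          * (θ + ζ + m + k) := by rw [ih]
      _ = (∏ j ∈ Finset.range k, (θ + j))
          * ((θ + ζ + m + k) * ∏ j ∈ Finset.range k, (θ + ζ + m + j)) := by ring
      _ = (∏ j ∈ Finset.range k, (θ + j))
          * ((θ + ζ + m) * ∏ j ∈ Finset.range k, (θ + ζ + m + 1 + j)) := by
            rw [show (θ+ζ+↑m+(k:ℝ)) * ∏ j ∈ Finset.range k, (θ + ζ + ↑m + ↑j)
              = (θ+ζ+↑m) * ∏ j ∈ Finset.range k, (θ + ζ + ↑m + 1 + ↑j) from (hshift).symm]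
      _ = (∏ j ∈ Finset.range k, (θ + j))
          * (∏ j ∈ Finset.range k, (θ + ζ + ((m + 1 : ℕ) : ℝ) + j)) * (θ + ζ + m) := by
            rw [Finset.prod_congr rfl hprod]; ring

lemma moment_n (hθ : 0 < θ) (hζ : 0 < ζ)
    (hP : ∀ (n : ℕ) (i : Gam n), P (rankCyl i) = ∏ j : Fin n, tzWt θ ζ j.val (i j))
    (n k : ℕ) :
    ∫ ω, ∏ j ∈ Finset.range k,
        (((firstEntry ω (n + 1) : ℕ) : ℝ) + θ - 1 + j) / (θ + ζ + n + j) ∂P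
      = ∏ j ∈ Finset.range k, ((θ + j) / (θ + ζ + j)) := by
  have h1 : ∀ ω : RankSpace, ∏ j ∈ Finset.range k,
      (((firstEntry ω (n + 1) : ℕ) : ℝ) + θ - 1 + j) / (θ + ζ + n + j)
      = RF θ k ((firstEntry ω (n + 1) : ℕ) : ℝ) / ∏ j ∈ Finset.range k, (θ + ζ + n + j) := by
    intro ω
    rw [RF, ← Finset.prod_div_distrib]
  simp only [h1]
  rw [integral_div]
  have hPn : (0:ℝ) < ∏ j ∈ Finset.range k, (θ + ζ + n + j) :=
    Finset.prod_pos fun j _ => by positivity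
  have hP0 : (0:ℝ) < ∏ j ∈ Finset.range k, (θ + ζ + j) :=
    Finset.prod_pos fun j _ => by positivity
  have hc := S_closed hθ hζ hP n k
  have h2 : ∫ ω, RF θ k ((firstEntry ω (n + 1) : ℕ) : ℝ) ∂P
      = (∏ j ∈ Finset.range k, (θ + j)) * (∏ j ∈ Finset.range k, (θ + ζ + n + j))
        / ∏ j ∈ Finset.range k, (θ + ζ + j) := by
    rw [eq_div_iff hP0.ne']; exact hc
  rw [h2, Finset.prod_div_distrib]
  field_simp

end S16

namespace S16
open Filter

variable {θ ζ : ℝ} {P : Measure RankSpace} [IsProbabilityMeasure P]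

noncomputable def M (θ ζ : ℝ) (n : ℕ) (ω : RankSpace) : ℝ :=
  (((firstEntry ω (n + 1) : ℕ) : ℝ) + θ - 1) / (θ + ζ + n)

def Filt : Filtration ℕ (inferInstance : MeasurableSpace RankSpace) where
  seq n := MeasurableSpace.comap (res (n + 1)) inferInstance
  mono' := by
    refine monotone_nat_of_le_succ fun n => ?_
    rw [res_eq_trunc_res (n + 1), ← MeasurableSpace.comap_comp]
    exact MeasurableSpace.comap_mono (measurable_iff_comap_le.mp (measurable_trunc (n + 1)))
  le' n := (measurable_res (n + 1)).comap_le

lemma measurable_filt_res (n : ℕ) :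
    Measurable[Filt n] (res (n + 1)) := measurable_iff_comap_le.mpr le_rfl

lemma M_eq_comp (θ ζ : ℝ) (n : ℕ) :
    M θ ζ n = (fun i : Gam (n + 1) => (((VG i : ℕ) : ℝ) + θ - 1) / (θ + ζ + n)) ∘ res (n + 1) :=
  funext fun ω => by rw [M, firstEntry_res]; rfl

lemma adapted_M : StronglyAdapted Filt (M θ ζ) := fun n => by
  rw [M_eq_comp]
  exact ((measurable_of_countable _).comp (measurable_filt_res n)).stronglyMeasurable

lemma measurable_M (θ ζ : ℝ) (n : ℕ) : Measurable (M θ ζ n) := by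
  rw [M_eq_comp]
  exact (measurable_of_countable _).comp (measurable_res (n + 1))

lemma M_bounds (hθ : 0 < θ) (hζ : 0 < ζ) (n : ℕ) (ω : RankSpace) :
    0 ≤ M θ ζ n ω ∧ M θ ζ n ω ≤ 1 := by
  have hD : (0:ℝ) < θ + ζ + n := by positivity
  have h1 : 1 ≤ firstEntry ω (n + 1) := firstEntry_pos ω (n + 1)
  have h2 : firstEntry ω (n + 1) ≤ n + 1 := firstEntry_le ω n
  have h1' : (1:ℝ) ≤ ((firstEntry ω (n + 1) : ℕ) : ℝ) := by exact_mod_cast h1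
  have h2' : ((firstEntry ω (n + 1) : ℕ) : ℝ) ≤ n + 1 := by exact_mod_cast h2
  constructor
  · exact div_nonneg (by linarith) hD.le
  · rw [M, div_le_one hD]; linarith

lemma integrable_M (hθ : 0 < θ) (hζ : 0 < ζ) (n : ℕ) : Integrable (M θ ζ n) P := by
  refine Integrable.mono' (integrable_const 1) (measurable_M θ ζ n).aestronglyMeasurable
    (Filter.Eventually.of_forall fun ω => ?_)
  rw [Real.norm_eq_abs, abs_of_nonneg (M_bounds hθ hζ n ω).1]
  exact (M_bounds hθ hζ n ω).2

lemma condexp_M (hθ : 0 < θ) (hζ : 0 < ζ)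
    (hP : ∀ (n : ℕ) (i : Gam n), P (rankCyl i) = ∏ j : Fin n, tzWt θ ζ j.val (i j)) (n : ℕ) :
    M θ ζ n =ᵐ[P] P[M θ ζ (n + 1) | Filt n] := by
  have hm : Filt n ≤ (inferInstance : MeasurableSpace RankSpace) := Filt.le n
  haveI : SigmaFinite (P.trim hm) := by
    haveI : IsFiniteMeasure (P.trim hm) := isFiniteMeasure_trim hm
    infer_instance
  refine ae_eq_condExp_of_forall_setIntegral_eq hm (integrable_M hθ hζ (n + 1))
    (fun s _ _ => (integrable_M hθ hζ n).integrableOn) (fun s hs _ => ?_)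
    ((adapted_M n).aestronglyMeasurable)
  obtain ⟨t, -, rfl⟩ := hs
  have hD : (0:ℝ) < θ + ζ + n := by positivity
  classical
  have hmeas_t : MeasurableSet (res (n + 1) ⁻¹' t) :=
    measurable_res (n + 1) (Set.to_countable t).measurableSet
  -- LHS : candidate M n
  have hLHS : ∫ ω in res (n + 1) ⁻¹' t, M θ ζ n ω ∂P
      = ∑ i : Gam (n + 1), pw θ ζ i *
          ((if i ∈ t then (1:ℝ) else 0) * ((((VG i : ℕ) : ℝ) + θ - 1) / (θ + ζ + n))) := by
    rw [← integral_indicator hmeas_t]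
    have h0 : ∀ ω, (res (n + 1) ⁻¹' t).indicator (M θ ζ n) ω
        = (fun i : Gam (n + 1) => (if i ∈ t then (1:ℝ) else 0)
            * ((((VG i : ℕ) : ℝ) + θ - 1) / (θ + ζ + n))) (res (n + 1) ω) := by
      intro ω
      rw [Set.indicator_apply]
      simp only [Set.mem_preimage]
      by_cases h : res (n + 1) ω ∈ t
      · rw [if_pos h, if_pos h, one_mul, M, firstEntry_res]
      · rw [if_neg h, if_neg h, zero_mul]
    rw [integral_congr_ae (Filter.Eventually.of_forall h0),
      integral_res hP (n + 1) (fun i : Gam (n + 1) => (if i ∈ t then (1:ℝ) else 0)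
        * ((((VG i : ℕ) : ℝ) + θ - 1) / (θ + ζ + n)))]
  -- RHS : M (n+1)
  have hRHS : ∫ ω in res (n + 1) ⁻¹' t, M θ ζ (n + 1) ω ∂P
      = ∑ i : Gam (n + 2), pw θ ζ i *
          ((if trunc i ∈ t then (1:ℝ) else 0)
            * ((((VG i : ℕ) : ℝ) + θ - 1) / (θ + ζ + n + 1))) := by
    rw [← integral_indicator hmeas_t]
    have hset : res (n + 1) ⁻¹' t = res (n + 2) ⁻¹' (trunc ⁻¹' t) := by
      rw [res_eq_trunc_res (n + 1)]; rfl
    have h0 : ∀ ω, (res (n + 1) ⁻¹' t).indicator (M θ ζ (n + 1)) ω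
        = (fun i : Gam (n + 2) => (if trunc i ∈ t then (1:ℝ) else 0)
            * ((((VG i : ℕ) : ℝ) + θ - 1) / (θ + ζ + n + 1))) (res (n + 2) ω) := by
      intro ω
      rw [hset, Set.indicator_apply]
      simp only [Set.mem_preimage]
      have hc : θ + ζ + ((n + 1 : ℕ) : ℝ) = θ + ζ + n + 1 := by push_cast; ring
      by_cases h : trunc (res (n + 2) ω) ∈ t
      · rw [if_pos h, if_pos h, one_mul, M, firstEntry_res, hc]
      · rw [if_neg h, if_neg h, zero_mul]
    rw [integral_congr_ae (Filter.Eventually.of_forall h0),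
      integral_res hP (n + 2) (fun i : Gam (n + 2) => (if trunc i ∈ t then (1:ℝ) else 0)
        * ((((VG i : ℕ) : ℝ) + θ - 1) / (θ + ζ + n + 1)))]
  rw [hLHS, hRHS]
  have hk := sum_key hθ hζ n (fun i => if i ∈ t then (1:ℝ) else 0)
      (fun m : ℕ => ((m : ℝ) + θ - 1) / (θ + ζ + n + 1))
  rw [hk]
  refine Finset.sum_congr rfl fun i _ => ?_
  have hcast : ((VG i + 1 : ℕ) : ℝ) = ((VG i : ℕ) : ℝ) + 1 := by push_cast; ring
  rw [hcast]
  by_cases h : i ∈ t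
  · rw [if_pos h]
    field_simp
    ring
  · rw [if_neg h]
    ring

lemma martingale_M (hθ : 0 < θ) (hζ : 0 < ζ)
    (hP : ∀ (n : ℕ) (i : Gam n), P (rankCyl i) = ∏ j : Fin n, tzWt θ ζ j.val (i j)) :
    Martingale (M θ ζ) Filt P :=
  martingale_nat adapted_M (fun n => integrable_M hθ hζ n) (fun n => condexp_M hθ hζ hP n)

lemma M_ae_tendsto (hθ : 0 < θ) (hζ : 0 < ζ)
    (hP : ∀ (n : ℕ) (i : Gam n), P (rankCyl i) = ∏ j : Fin n, tzWt θ ζ j.val (i j)) :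
    ∀ᵐ ω ∂P, ∃ c, Tendsto (fun n => M θ ζ n ω) atTop (nhds c) := by
  refine (martingale_M hθ hζ hP).submartingale.exists_ae_tendsto_of_bdd (R := 1) fun n => ?_
  have : eLpNorm (M θ ζ n) 1 P ≤ (P Set.univ) ^ (1:ℝ≥0∞).toReal⁻¹ * ENNReal.ofReal 1 :=
    eLpNorm_le_of_ae_bound (Filter.Eventually.of_forall fun ω => by
      rw [Real.norm_eq_abs, abs_of_nonneg (M_bounds hθ hζ n ω).1]
      exact (M_bounds hθ hζ n ω).2)
  simpa using this

end S16

namespace S16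
open Filter

lemma beta_ae_eq {a b : ℝ} :
    ∀ x ∈ Set.Ioc (0:ℝ) 1,
      ((x:ℂ) ^ ((a:ℂ) - 1) * ((1:ℂ) - (x:ℂ)) ^ ((b:ℂ) - 1))
        = ((x ^ (a - 1) * (1 - x) ^ (b - 1) : ℝ) : ℂ) := by
  intro x hx
  have h1 : ((x ^ (a - 1) : ℝ) : ℂ) = (x:ℂ) ^ ((a:ℂ) - 1) := by
    rw [Complex.ofReal_cpow hx.1.le]
    push_cast
    ring_nf
  have h2 : (((1 - x) ^ (b - 1) : ℝ) : ℂ) = ((1:ℂ) - (x:ℂ)) ^ ((b:ℂ) - 1) := by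
    rw [Complex.ofReal_cpow (by linarith [hx.2] : (0:ℝ) ≤ 1 - x)]
    push_cast
    ring_nf
  rw [Complex.ofReal_mul, h1, h2]

lemma beta_integrableOn {a b : ℝ} (ha : 0 < a) (hb : 0 < b) :
    IntegrableOn (fun x : ℝ => x ^ (a - 1) * (1 - x) ^ (b - 1)) (Set.Ioc 0 1) volume := by
  have hc := Complex.betaIntegral_convergent (u := a) (v := b) (by simpa) (by simpa)
  rw [intervalIntegrable_iff, Set.uIoc_of_le zero_le_one] at hc
  have hre := hc.re
  refine (integrableOn_congr_fun (fun x hx => ?_) measurableSet_Ioc).mp hre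
  rw [show ((x:ℂ) ^ ((a:ℂ) - 1) * ((1:ℂ) - (x:ℂ)) ^ ((b:ℂ) - 1))
      = ((x ^ (a - 1) * (1 - x) ^ (b - 1) : ℝ) : ℂ) from beta_ae_eq x hx]
  simp

lemma beta_value {a b : ℝ} (ha : 0 < a) (hb : 0 < b) :
    ∫ x in Set.Ioc (0:ℝ) 1, x ^ (a - 1) * (1 - x) ^ (b - 1)
      = Real.Gamma a * Real.Gamma b / Real.Gamma (a + b) := by
  have h := Complex.Gamma_mul_Gamma_eq_betaIntegral (s := a) (t := b) (by simpa) (by simpa)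
  rw [Complex.betaIntegral, intervalIntegral.integral_of_le zero_le_one] at h
  rw [setIntegral_congr_fun measurableSet_Ioc (fun x hx => beta_ae_eq x hx)] at h
  rw [show (∫ x in Set.Ioc (0:ℝ) 1, ((x ^ (a - 1) * (1 - x) ^ (b - 1) : ℝ) : ℂ) ∂volume)
      = ((∫ x in Set.Ioc (0:ℝ) 1, x ^ (a - 1) * (1 - x) ^ (b - 1) ∂volume : ℝ) : ℂ)
    from integral_ofReal] at h
  rw [Complex.Gamma_ofReal, Complex.Gamma_ofReal, show (a:ℂ) + (b:ℂ) = ((a+b:ℝ):ℂ) by push_cast; ring,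
    Complex.Gamma_ofReal, ← Complex.ofReal_mul, ← Complex.ofReal_mul] at h
  have h2 : Real.Gamma a * Real.Gamma b
      = Real.Gamma (a + b) * ∫ x in Set.Ioc (0:ℝ) 1, x ^ (a - 1) * (1 - x) ^ (b - 1) := by
    exact_mod_cast h
  have hG : Real.Gamma (a + b) ≠ 0 := (Real.Gamma_pos_of_pos (by linarith)).ne'
  field_simp
  linarith [h2]

lemma Gamma_add_nat {x : ℝ} (hx : 0 < x) (k : ℕ) :
    Real.Gamma (x + k) = Real.Gamma x * ∏ j ∈ Finset.range k, (x + j) := by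
  induction k with
  | zero => simp
  | succ m ih =>
    have hxm : (0:ℝ) < x + m := by positivity
    have : x + ((m + 1 : ℕ) : ℝ) = (x + m) + 1 := by push_cast; ring
    rw [this, Real.Gamma_add_one hxm.ne', ih, Finset.prod_range_succ]
    ring

end S16

namespace S16
open Filter

noncomputable def dens (θ ζ : ℝ) (x : ℝ) : ℝ :=
  x ^ (θ - 1) * (1 - x) ^ (ζ - 1) * Real.Gamma (θ + ζ) / (Real.Gamma θ * Real.Gamma ζ)

noncomputable def muB (θ ζ : ℝ) : Measure ℝ :=
  (volume.restrict (Set.Icc (0 : ℝ) 1)).withDensity fun x => ENNReal.ofReal (dens θ ζ x)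

variable {θ ζ : ℝ}

lemma measurable_rpow_const (c : ℝ) : Measurable fun x : ℝ => x ^ c :=
  measurable_of_continuousOn_compl_singleton 0
    (fun x hx => (Real.continuousAt_rpow_const x c
      (Or.inl (Set.mem_compl_singleton_iff.mp hx))).continuousWithinAt)

lemma measurable_dens (θ ζ : ℝ) : Measurable (dens θ ζ) := by
  unfold dens
  exact (((measurable_rpow_const (θ - 1)).mul
    ((measurable_rpow_const (ζ - 1)).comp (measurable_const.sub measurable_id))).mul
      measurable_const).div measurable_const

lemma dens_nonneg (hθ : 0 < θ) (hζ : 0 < ζ) {x : ℝ} (hx : x ∈ Set.Icc (0:ℝ) 1) :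
    0 ≤ dens θ ζ x := by
  have h1 : (0:ℝ) ≤ x := hx.1
  have h2 : (0:ℝ) ≤ 1 - x := by linarith [hx.2]
  unfold dens
  have := Real.Gamma_pos_of_pos hθ
  have := Real.Gamma_pos_of_pos hζ
  have := Real.Gamma_pos_of_pos (show (0:ℝ) < θ + ζ by linarith)
  positivity

lemma restrict_Icc_eq_Ioc :
    (volume : Measure ℝ).restrict (Set.Icc (0:ℝ) 1) = volume.restrict (Set.Ioc (0:ℝ) 1) :=
  (Measure.restrict_congr_set Ioc_ae_eq_Icc).symm

lemma dens_integrableOn (hθ : 0 < θ) (hζ : 0 < ζ) :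
    IntegrableOn (dens θ ζ) (Set.Ioc (0:ℝ) 1) volume := by
  have h := (beta_integrableOn hθ hζ).mul_const
    (Real.Gamma (θ + ζ) / (Real.Gamma θ * Real.Gamma ζ))
  refine IntegrableOn.congr_fun h (fun x _ => ?_) measurableSet_Ioc
  unfold dens; ring

lemma dens_integral (hθ : 0 < θ) (hζ : 0 < ζ) :
    ∫ x in Set.Ioc (0:ℝ) 1, dens θ ζ x = 1 := by
  have hGθ := (Real.Gamma_pos_of_pos hθ).ne'
  have hGζ := (Real.Gamma_pos_of_pos hζ).ne'
  have hGs := (Real.Gamma_pos_of_pos (show (0:ℝ) < θ + ζ by linarith)).ne'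
  have h1 : ∫ x in Set.Ioc (0:ℝ) 1, dens θ ζ x
      = (∫ x in Set.Ioc (0:ℝ) 1, x ^ (θ - 1) * (1 - x) ^ (ζ - 1))
        * (Real.Gamma (θ + ζ) / (Real.Gamma θ * Real.Gamma ζ)) := by
    rw [← integral_mul_const]
    exact setIntegral_congr_fun measurableSet_Ioc (fun x _ => by unfold dens; ring)
  rw [h1, beta_value hθ hζ]
  field_simp

theorem muB_prob (hθ : 0 < θ) (hζ : 0 < ζ) : IsProbabilityMeasure (muB θ ζ) := by
  constructor
  rw [muB, withDensity_apply _ MeasurableSet.univ, Measure.restrict_univ, restrict_Icc_eq_Ioc,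
    ← ofReal_integral_eq_lintegral_ofReal (dens_integrableOn hθ hζ)
      ((ae_restrict_iff' measurableSet_Ioc).mpr
        (Filter.Eventually.of_forall fun x hx => dens_nonneg hθ hζ (Set.Ioc_subset_Icc_self hx))),
    dens_integral hθ hζ]
  simp

lemma muB_compl (hθ : 0 < θ) (hζ : 0 < ζ) : muB θ ζ (Set.Icc (0:ℝ) 1)ᶜ = 0 := by
  rw [muB, withDensity_apply _ measurableSet_Icc.compl, Measure.restrict_restrict
    measurableSet_Icc.compl, Set.compl_inter_self, Measure.restrict_empty, lintegral_zero_measure]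

lemma muB_moment (hθ : 0 < θ) (hζ : 0 < ζ) (k : ℕ) :
    ∫ x, x ^ k ∂(muB θ ζ) = ∏ j ∈ Finset.range k, ((θ + j) / (θ + ζ + j)) := by
  have hGθ := (Real.Gamma_pos_of_pos hθ).ne'
  have hGζ := (Real.Gamma_pos_of_pos hζ).ne'
  have hGs := (Real.Gamma_pos_of_pos (show (0:ℝ) < θ + ζ by linarith)).ne'
  have hθk : (0:ℝ) < θ + k := by positivity
  have hGθk := (Real.Gamma_pos_of_pos hθk).ne'
  have hGsk := (Real.Gamma_pos_of_pos (show (0:ℝ) < θ + k + ζ by positivity)).ne'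
  have hmeasnn : Measurable fun x => (dens θ ζ x).toNNReal :=
    (measurable_dens θ ζ).real_toNNReal
  have h0 : ∫ x, x ^ k ∂(muB θ ζ)
      = ∫ x in Set.Icc (0:ℝ) 1, ((dens θ ζ x).toNNReal : ℝ) • x ^ k ∂volume := by
    rw [muB]
    exact integral_withDensity_eq_integral_smul hmeasnn _
  rw [h0, restrict_Icc_eq_Ioc]
  have h1 : ∫ x in Set.Ioc (0:ℝ) 1, ((dens θ ζ x).toNNReal : ℝ) • x ^ k ∂volume
      = ∫ x in Set.Ioc (0:ℝ) 1, (x ^ (θ + (k:ℝ) - 1) * (1 - x) ^ (ζ - 1))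
          * (Real.Gamma (θ + ζ) / (Real.Gamma θ * Real.Gamma ζ)) ∂volume := by
    refine setIntegral_congr_fun measurableSet_Ioc (fun x hx => ?_)
    rw [smul_eq_mul, Real.coe_toNNReal _ (dens_nonneg hθ hζ (Set.Ioc_subset_Icc_self hx))]
    have hx0 : (0:ℝ) < x := hx.1
    have hxk : (x:ℝ) ^ k = x ^ ((k:ℕ):ℝ) := (Real.rpow_natCast x k).symm
    unfold dens
    rw [div_mul_eq_mul_div, mul_comm, hxk]
    rw [show θ + (k:ℝ) - 1 = (θ - 1) + (k:ℝ) by ring, Real.rpow_add hx0]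
    ring
  rw [h1, integral_mul_const, show θ + (k:ℝ) - 1 = (θ + (k:ℝ)) - 1 by ring,
    beta_value hθk hζ, Gamma_add_nat hθ k,
    show θ + (k:ℝ) + ζ = (θ + ζ) + k by ring, Gamma_add_nat (by linarith : (0:ℝ) < θ + ζ) k,
    Finset.prod_div_distrib]
  have hp1 : (0:ℝ) < ∏ j ∈ Finset.range k, (θ + ζ + j) :=
    Finset.prod_pos fun j _ => by positivity
  field_simp

end S16

namespace S16
open Filter

lemma tendsto_aux0 (c d : ℝ) :
    Tendsto (fun n : ℕ => c / ((n:ℝ) + d)) atTop (nhds 0) :=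
  Tendsto.div_atTop tendsto_const_nhds
    (tendsto_atTop_add_const_right _ d tendsto_natCast_atTop_atTop)

lemma tendsto_aux1 (c d : ℝ) (hd : 0 < d) :
    Tendsto (fun n : ℕ => ((n:ℝ) + c) / ((n:ℝ) + d)) atTop (nhds 1) := by
  have h1 : ∀ n : ℕ, ((n:ℝ) + c) / ((n:ℝ) + d) = 1 + (c - d) / ((n:ℝ) + d) := by
    intro n
    have h : (0:ℝ) < (n:ℝ) + d := by positivity
    field_simp
    ring
  rw [tendsto_congr h1]
  simpa using (tendsto_const_nhds (x := (1:ℝ))).add (tendsto_aux0 (c - d) d)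

lemma integrable_of_cont_Icc {μ : Measure ℝ} [IsProbabilityMeasure μ]
    (hsupp : ∀ᵐ x ∂μ, x ∈ Set.Icc (0:ℝ) 1) {g : ℝ → ℝ} (hg : Continuous g) :
    Integrable g μ := by
  obtain ⟨C, hC⟩ :=
    (isCompact_Icc (a := (0:ℝ)) (b := 1)).exists_bound_of_continuousOn hg.continuousOn
  refine Integrable.mono' (integrable_const C) hg.measurable.aestronglyMeasurable ?_
  filter_upwards [hsupp] with x hx using hC x hx

lemma integral_eq_of_moments {μ1 μ2 : Measure ℝ} [IsProbabilityMeasure μ1]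
    [IsProbabilityMeasure μ2]
    (h1 : ∀ᵐ x ∂μ1, x ∈ Set.Icc (0:ℝ) 1) (h2 : ∀ᵐ x ∂μ2, x ∈ Set.Icc (0:ℝ) 1)
    (hm : ∀ k : ℕ, ∫ x, x ^ k ∂μ1 = ∫ x, x ^ k ∂μ2)
    {g : ℝ → ℝ} (hg : Continuous g) : ∫ x, g x ∂μ1 = ∫ x, g x ∂μ2 := by
  have hint1 : Integrable g μ1 := integrable_of_cont_Icc h1 hg
  have hint2 : Integrable g μ2 := integrable_of_cont_Icc h2 hg
  have key : ∀ ε : ℝ, 0 < ε → |∫ x, g x ∂μ1 - ∫ x, g x ∂μ2| ≤ 2 * ε := by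
    intro ε hε
    obtain ⟨p, hp⟩ := exists_polynomial_near_of_continuousOn 0 1 g hg.continuousOn ε hε
    have hpc : Continuous fun x : ℝ => p.eval x := p.continuous
    have hpint1 : Integrable (fun x => p.eval x) μ1 := integrable_of_cont_Icc h1 hpc
    have hpint2 : Integrable (fun x => p.eval x) μ2 := integrable_of_cont_Icc h2 hpc
    have he : ∀ (μ : Measure ℝ), IsProbabilityMeasure μ → (∀ᵐ x ∂μ, x ∈ Set.Icc (0:ℝ) 1) →
        ∫ x, p.eval x ∂μ
          = ∑ j ∈ Finset.range (p.natDegree + 1), p.coeff j * ∫ x, x ^ j ∂μ := by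
      intro μ hμ hs
      have hev : ∀ x : ℝ, p.eval x
          = ∑ j ∈ Finset.range (p.natDegree + 1), p.coeff j * x ^ j := fun x =>
        Polynomial.eval_eq_sum_range (p := p) x
      rw [integral_congr_ae (Filter.Eventually.of_forall hev),
        integral_finset_sum _ (fun j _ =>
          ((integrable_of_cont_Icc hs (continuous_pow j)).const_mul _))]
      exact Finset.sum_congr rfl fun j _ => integral_const_mul _ _
    have hpeq : ∫ x, p.eval x ∂μ1 = ∫ x, p.eval x ∂μ2 := by
      rw [he μ1 inferInstance h1, he μ2 inferInstance h2]
      exact Finset.sum_congr rfl fun j _ => by rw [hm j]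
    have hd : ∀ (μ : Measure ℝ), IsProbabilityMeasure μ → (∀ᵐ x ∂μ, x ∈ Set.Icc (0:ℝ) 1) →
        Integrable g μ → Integrable (fun x => p.eval x) μ →
        |∫ x, g x ∂μ - ∫ x, p.eval x ∂μ| ≤ ε := by
      intro μ hμ hs hgi hpi
      rw [← integral_sub hgi hpi]
      have hb : ∀ᵐ x ∂μ, ‖g x - p.eval x‖ ≤ ε := by
        filter_upwards [hs] with x hx
        rw [Real.norm_eq_abs, abs_sub_comm]
        exact (hp x hx).le
      have := norm_integral_le_of_norm_le_const (μ := μ) hb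
      simpa [measure_univ] using this
    calc |∫ x, g x ∂μ1 - ∫ x, g x ∂μ2|
        ≤ |∫ x, g x ∂μ1 - ∫ x, p.eval x ∂μ2|
          + |∫ x, p.eval x ∂μ2 - ∫ x, g x ∂μ2| := abs_sub_le _ _ _
      _ = |∫ x, g x ∂μ1 - ∫ x, p.eval x ∂μ1|
          + |∫ x, g x ∂μ2 - ∫ x, p.eval x ∂μ2| := by
          rw [abs_sub_comm (∫ x, p.eval x ∂μ2) (∫ x, g x ∂μ2)]
          nth_rewrite 1 [← hpeq]
          rfl
      _ ≤ ε + ε := add_le_add (hd μ1 inferInstance h1 hint1 hpint1)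
          (hd μ2 inferInstance h2 hint2 hpint2)
      _ = 2 * ε := by ring
  by_contra hne
  have habs : 0 < |∫ x, g x ∂μ1 - ∫ x, g x ∂μ2| := abs_pos.mpr (sub_ne_zero.mpr hne)
  have := key (|∫ x, g x ∂μ1 - ∫ x, g x ∂μ2| / 3) (by positivity)
  linarith

lemma measure_eq_of_moments {μ1 μ2 : Measure ℝ} [IsProbabilityMeasure μ1]
    [IsProbabilityMeasure μ2]
    (h1 : ∀ᵐ x ∂μ1, x ∈ Set.Icc (0:ℝ) 1) (h2 : ∀ᵐ x ∂μ2, x ∈ Set.Icc (0:ℝ) 1)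
    (hm : ∀ k : ℕ, ∫ x, x ^ k ∂μ1 = ∫ x, x ^ k ∂μ2) : μ1 = μ2 := by
  refine ext_of_forall_lintegral_eq_of_IsFiniteMeasure fun f => ?_
  have hfc : Continuous fun x : ℝ => ((f x : NNReal) : ℝ) := NNReal.continuous_coe.comp f.continuous
  rw [lintegral_coe_eq_integral f (integrable_of_cont_Icc h1 hfc),
    lintegral_coe_eq_integral f (integrable_of_cont_Icc h2 hfc),
    integral_eq_of_moments h1 h2 hm hfc]

end S16

open S16 Filter

/-- under `P^{(θ,ζ)}` there is a measurable `ρ₀ : Ω → [0,1]` with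
`V_n/n → ρ₀` a.s., and the law of `ρ₀` is beta`(θ,ζ)`. -/
theorem stmt_16 (θ ζ : ℝ) (hθ : 0 < θ) (hζ : 0 < ζ)
    (P : Measure RankSpace) [IsProbabilityMeasure P]
    (hP : ∀ (n : ℕ) (i : (j : Fin n) → Fin (j.val + 1)),
      P (rankCyl i) = ∏ j : Fin n, tzWt θ ζ j.val (i j)) :
    ∃ ρ : RankSpace → ℝ, Measurable ρ ∧ (∀ ω, ρ ω ∈ Set.Icc (0 : ℝ) 1) ∧
      (∀ᵐ ω ∂P, Filter.Tendsto (fun n : ℕ => (firstEntry ω n : ℝ) / (n : ℝ))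
        Filter.atTop (nhds (ρ ω))) ∧
      Measure.map ρ P
        = (volume.restrict (Set.Icc (0 : ℝ) 1)).withDensity fun x =>
            ENNReal.ofReal
              (x ^ (θ - 1) * (1 - x) ^ (ζ - 1) * Real.Gamma (θ + ζ)
                / (Real.Gamma θ * Real.Gamma ζ)) := by
  classical
  set ρ : RankSpace → ℝ :=
    fun ω => (Filter.limsup (fun n => ENNReal.ofReal (M θ ζ n ω)) Filter.atTop).toReal with hρdef
  have hρmeas : Measurable ρ :=
    (Measurable.limsup fun n => (measurable_M θ ζ n).ennreal_ofReal).ennreal_toReal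
  have hρIcc : ∀ ω, ρ ω ∈ Set.Icc (0:ℝ) 1 := by
    intro ω
    refine ⟨ENNReal.toReal_nonneg, ?_⟩
    refine ENNReal.toReal_le_of_le_ofReal zero_le_one ?_
    refine Filter.limsup_le_of_le (by isBoundedDefault)
      (Filter.Eventually.of_forall fun n => ?_)
    exact ENNReal.ofReal_le_ofReal (M_bounds hθ hζ n ω).2
  have haeV : ∀ᵐ ω ∂P, Filter.Tendsto (fun n : ℕ => (firstEntry ω n : ℝ) / (n : ℝ))
      Filter.atTop (nhds (ρ ω)) := by
    filter_upwards [M_ae_tendsto hθ hζ hP] with ω hc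
    obtain ⟨c, hc⟩ := hc
    have hc0 : 0 ≤ c :=
      ge_of_tendsto hc (Filter.Eventually.of_forall fun n => (M_bounds hθ hζ n ω).1)
    have hρω : ρ ω = c := by
      have h2 : Filter.Tendsto (fun n => ENNReal.ofReal (M θ ζ n ω)) Filter.atTop
          (nhds (ENNReal.ofReal c)) := (ENNReal.continuous_ofReal.tendsto c).comp hc
      rw [hρdef]
      simp only
      rw [h2.limsup_eq, ENNReal.toReal_ofReal hc0]
    rw [hρω]
    have h1 : Filter.Tendsto (fun n : ℕ => (firstEntry ω (n + 1) : ℝ) / (((n + 1 : ℕ)) : ℝ))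
        Filter.atTop (nhds c) := by
      have heq : ∀ n : ℕ, (firstEntry ω (n + 1) : ℝ) / (((n + 1 : ℕ)) : ℝ)
          = M θ ζ n ω * (((n:ℝ) + (θ + ζ)) / ((n:ℝ) + 1)) + (1 - θ) / ((n:ℝ) + 1) := by
        intro n
        rw [M]
        have h := (show (0:ℝ) < θ + ζ + n by positivity)
        have h1 : (0:ℝ) < (n:ℝ) + 1 := by positivity
        push_cast
        field_simp
        ring
      rw [tendsto_congr heq]
      have := (hc.mul (tendsto_aux1 (θ + ζ) 1 one_pos)).add (tendsto_aux0 (1 - θ) 1)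
      simpa using this
    exact (Filter.tendsto_add_atTop_iff_nat
      (f := fun n : ℕ => (firstEntry ω n : ℝ) / (n : ℝ)) 1).mp h1
  have hmomρ : ∀ k : ℕ, ∫ ω, (ρ ω) ^ k ∂P
      = ∏ j ∈ Finset.range k, ((θ + j) / (θ + ζ + j)) := by
    intro k
    have hFmeas : ∀ n : ℕ, AEStronglyMeasurable (fun ω => ∏ j ∈ Finset.range k,
        ((firstEntry ω (n + 1) : ℝ) + θ - 1 + j) / (θ + ζ + n + j)) P := by
      intro n
      have he : (fun ω => ∏ j ∈ Finset.range k,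
          ((firstEntry ω (n + 1) : ℝ) + θ - 1 + j) / (θ + ζ + n + j))
          = (fun i : Gam (n + 1) => ∏ j ∈ Finset.range k,
              ((VG i : ℝ) + θ - 1 + j) / (θ + ζ + n + j)) ∘ res (n + 1) :=
        funext fun ω => by simp only [Function.comp_apply, firstEntry_res ω (n + 1)]
      rw [he]
      exact ((measurable_of_countable _).comp (measurable_res (n + 1))).aestronglyMeasurable
    have hbound : ∀ n : ℕ, ∀ᵐ ω ∂P, ‖∏ j ∈ Finset.range k,
        ((firstEntry ω (n + 1) : ℝ) + θ - 1 + j) / (θ + ζ + n + j)‖ ≤ 1 := by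
      intro n
      refine Filter.Eventually.of_forall fun ω => ?_
      rw [Real.norm_eq_abs, Finset.abs_prod]
      refine Finset.prod_le_one (fun j _ => abs_nonneg _) (fun j _ => ?_)
      have h1' : (1:ℝ) ≤ (firstEntry ω (n + 1) : ℝ) := by
        exact_mod_cast firstEntry_pos ω (n + 1)
      have h2' : (firstEntry ω (n + 1) : ℝ) ≤ (n:ℝ) + 1 := by
        exact_mod_cast firstEntry_le ω n
      have hDj : (0:ℝ) < θ + ζ + n + j := by positivity
      rw [abs_div, abs_of_nonneg (by linarith : (0:ℝ) ≤ (firstEntry ω (n + 1) : ℝ) + θ - 1 + j),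
        abs_of_pos hDj, div_le_one hDj]
      linarith
    have hlim : ∀ᵐ ω ∂P, Filter.Tendsto (fun n => ∏ j ∈ Finset.range k,
        ((firstEntry ω (n + 1) : ℝ) + θ - 1 + j) / (θ + ζ + n + j)) Filter.atTop
        (nhds ((ρ ω) ^ k)) := by
      filter_upwards [haeV] with ω hV
      have hV1 : Filter.Tendsto (fun n : ℕ => (firstEntry ω (n + 1) : ℝ) / (((n + 1 : ℕ)) : ℝ))
          Filter.atTop (nhds (ρ ω)) :=
        (Filter.tendsto_add_atTop_iff_nat
          (f := fun n : ℕ => (firstEntry ω n : ℝ) / (n : ℝ)) 1).mpr hV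
      have hfac : ∀ j ∈ Finset.range k, Filter.Tendsto (fun n : ℕ =>
          ((firstEntry ω (n + 1) : ℝ) + θ - 1 + j) / (θ + ζ + n + j)) Filter.atTop
          (nhds (ρ ω)) := by
        intro j _
        have heq : ∀ n : ℕ, ((firstEntry ω (n + 1) : ℝ) + θ - 1 + j) / (θ + ζ + n + j)
            = ((firstEntry ω (n + 1) : ℝ) / (((n + 1 : ℕ)) : ℝ))
                * (((n:ℝ) + 1) / ((n:ℝ) + (θ + ζ + j)))
              + (θ - 1 + j) / ((n:ℝ) + (θ + ζ + j)) := by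
          intro n
          have h1 : (0:ℝ) < (n:ℝ) + 1 := by positivity
          have h2 : (0:ℝ) < (n:ℝ) + (θ + ζ + j) := by positivity
          push_cast
          field_simp
          ring
        rw [tendsto_congr heq]
        have := (hV1.mul (tendsto_aux1 1 (θ + ζ + j) (by positivity))).add
          (tendsto_aux0 (θ - 1 + j) (θ + ζ + j))
        simpa using this
      have := tendsto_finset_prod (Finset.range k) hfac
      simpa [Finset.prod_const, Finset.card_range] using this
    have hDCT := tendsto_integral_of_dominated_convergence (bound := fun _ => (1:ℝ))
      hFmeas (integrable_const 1) hbound hlim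
    have hconst : ∀ n : ℕ, ∫ ω, ∏ j ∈ Finset.range k,
        ((firstEntry ω (n + 1) : ℝ) + θ - 1 + j) / (θ + ζ + n + j) ∂P
        = ∏ j ∈ Finset.range k, ((θ + j) / (θ + ζ + j)) := fun n => moment_n hθ hζ hP n k
    rw [tendsto_congr hconst] at hDCT
    exact tendsto_nhds_unique hDCT tendsto_const_nhds
  refine ⟨ρ, hρmeas, hρIcc, haeV, ?_⟩
  have hmap : IsProbabilityMeasure (P.map ρ) := Measure.isProbabilityMeasure_map hρmeas.aemeasurable
  haveI hBprob : IsProbabilityMeasure (muB θ ζ) := muB_prob hθ hζ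
  have hsupp1 : ∀ᵐ x ∂(P.map ρ), x ∈ Set.Icc (0:ℝ) 1 := by
    rw [ae_iff]
    rw [show {x : ℝ | ¬ x ∈ Set.Icc (0:ℝ) 1} = (Set.Icc (0:ℝ) 1)ᶜ from rfl]
    rw [Measure.map_apply hρmeas measurableSet_Icc.compl]
    rw [show ρ ⁻¹' (Set.Icc (0:ℝ) 1)ᶜ = ∅ from
      Set.eq_empty_iff_forall_notMem.mpr fun ω h => h (hρIcc ω)]
    exact measure_empty
  have hsupp2 : ∀ᵐ x ∂(muB θ ζ), x ∈ Set.Icc (0:ℝ) 1 := by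
    rw [ae_iff]
    rw [show {x : ℝ | ¬ x ∈ Set.Icc (0:ℝ) 1} = (Set.Icc (0:ℝ) 1)ᶜ from rfl]
    exact muB_compl hθ hζ
  have hm : ∀ k : ℕ, ∫ x, x ^ k ∂(P.map ρ) = ∫ x, x ^ k ∂(muB θ ζ) := by
    intro k
    rw [integral_map hρmeas.aemeasurable (continuous_pow k).aestronglyMeasurable,
      hmomρ k, muB_moment hθ hζ k]
  show Measure.map ρ P = muB θ ζ
  exact measure_eq_of_moments hsupp1 hsupp2 hm
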